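/- Let (X,d) be an unbounded metric space and p∈X. Then the condition lim_{k→1⁺} limsup_{r→∞} diam(A(p,r,k))/r = limsup_{r→∞} diam(S(p,r))/r = 0 holds if and only if for every scaling sequence r̃ the labeling ρ⁰ : V(G_{X,r̃}) → ℝ⁺ is an injective function. -/

import Mathlib

open Filter Topology
open scoped Classical

/-- An unbounded metric space. -/
def UnboundedSpace (X : Type*) [MetricSpace X] : Prop :=
  ¬ Bornology.IsBounded (Set.univ : Set X)

/-- A scaling sequence: positive reals tending to infinity. -/
def ScalingSeq (r : ℕ → ℝ) : Prop :=
  (∀ n, 0 < r n) ∧ Filter.Tendsto r Filter.atTop Filter.atTop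

/-- Two sequences are mutually stable w.r.t. `r` if `d(x_n, y_n)/r_n` has a finite limit. -/
def MutuallyStable {X : Type*} [MetricSpace X] (r : ℕ → ℝ) (x y : ℕ → X) : Prop :=
  ∃ L : ℝ, Filter.Tendsto (fun n => dist (x n) (y n) / r n) Filter.atTop (nhds L)

/-- `Seq(X, r̃)`: sequences going to infinity such that `d(x_n, p)/r_n` has a finite limit. -/
def SeqInf {X : Type*} [MetricSpace X] (r : ℕ → ℝ) (p : X) : Set (ℕ → X) :=
  {x | Filter.Tendsto (fun n => dist (x n) p) Filter.atTop Filter.atTop ∧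
    ∃ L : ℝ, Filter.Tendsto (fun n => dist (x n) p / r n) Filter.atTop (nhds L)}

/-- The relation `x̃ ≡ ỹ`, i.e. `d(x_n, y_n)/r_n → 0`. -/
def EquivSeq {X : Type*} [MetricSpace X] (r : ℕ → ℝ) (x y : ℕ → X) : Prop :=
  Filter.Tendsto (fun n => dist (x n) (y n) / r n) Filter.atTop (nhds 0)

/-- The `≡`-equivalence class of `x` inside `Seq(X, r̃)`. -/
def classOf {X : Type*} [MetricSpace X] (r : ℕ → ℝ) (p : X) (x : ℕ → X) : Set (ℕ → X) :=
  {y | y ∈ SeqInf r p ∧ EquivSeq r x y}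

/-- The vertex set of the cluster graph `G_{X, r̃}`: all `≡`-classes of `Seq(X, r̃)`. -/
def VertexSet {X : Type*} [MetricSpace X] (r : ℕ → ℝ) (p : X) : Set (Set (ℕ → X)) :=
  {v | ∃ x ∈ SeqInf r p, v = classOf r p x}

/-- Adjacency in the cluster graph `G_{X, r̃}`: distinct classes whose representatives
are mutually stable. -/
def AdjacentCl {X : Type*} [MetricSpace X] (r : ℕ → ℝ) (p : X) (u v : Set (ℕ → X)) : Prop :=
  u ∈ VertexSet r p ∧ v ∈ VertexSet r p ∧ u ≠ v ∧
    ∀ x ∈ u, ∀ y ∈ v, MutuallyStable r x y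

/-- The weight `ρ_X` on the cluster graph: for an edge `{u,v}` it is the (unique) limit
`lim d(x_n, y_n)/r_n` for representatives. -/
noncomputable def rhoX {X : Type*} [MetricSpace X] (r : ℕ → ℝ) (u v : Set (ℕ → X)) : ℝ :=
  sSup {L : ℝ | ∃ x ∈ u, ∃ y ∈ v,
    Filter.Tendsto (fun n => dist (x n) (y n) / r n) Filter.atTop (nhds L)}

/-- The root `ν₀ = X̃⁰_{∞,r̃}`: sequences with `d(z_n,p) → ∞` and `d(z_n,p)/r_n → 0`. -/
def rootClass {X : Type*} [MetricSpace X] (r : ℕ → ℝ) (p : X) : Set (ℕ → X) :=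
  {z | Filter.Tendsto (fun n => dist (z n) p) Filter.atTop Filter.atTop ∧
    Filter.Tendsto (fun n => dist (z n) p / r n) Filter.atTop (nhds 0)}

/-- The labeling `ρ⁰` of vertices: `ρ⁰(v) = lim d(x_n,p)/r_n` for `x̃ ∈ v`. -/
noncomputable def rho0 {X : Type*} [MetricSpace X] (r : ℕ → ℝ) (p : X)
    (v : Set (ℕ → X)) : ℝ :=
  sSup {L : ℝ | ∃ x ∈ v, Filter.Tendsto (fun n => dist (x n) p / r n) Filter.atTop (nhds L)}

/-- A self-stable family: a subset of `Seq(X, r̃)` any two of whose members are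
mutually stable. -/
def SelfStable {X : Type*} [MetricSpace X] (r : ℕ → ℝ) (p : X) (F : Set (ℕ → X)) : Prop :=
  F ⊆ SeqInf r p ∧ ∀ x ∈ F, ∀ y ∈ F, MutuallyStable r x y

/-- A maximal self-stable set `X̃_{∞, r̃}`. -/
def MaxSelfStable {X : Type*} [MetricSpace X] (r : ℕ → ℝ) (p : X) (F : Set (ℕ → X)) : Prop :=
  SelfStable r p F ∧ ∀ F', SelfStable r p F' → F ⊆ F' → F = F'

/-- The pretangent space `Ω^X_{∞,r̃}` attached to a maximal self-stable set `F`: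
the set of `≡`-classes of members of `F`. -/
def PretangentCl {X : Type*} [MetricSpace X] (r : ℕ → ℝ) (F : Set (ℕ → X)) :
    Set (Set (ℕ → X)) :=
  {v | ∃ x ∈ F, v = {y | y ∈ F ∧ EquivSeq r x y}}

/-- A clique in the cluster graph `G_{X, r̃}`. -/
def IsCliqueCl {X : Type*} [MetricSpace X] (r : ℕ → ℝ) (p : X)
    (C : Set (Set (ℕ → X))) : Prop :=
  C ⊆ VertexSet r p ∧ ∀ u ∈ C, ∀ v ∈ C, u ≠ v → AdjacentCl r p u v

/-- The function `F_n` of Theorem t2.2.1. -/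
noncomputable def FnFun {X : Type*} [MetricSpace X] (p : X) (n : ℕ) (x : Fin n → X) : ℝ :=
  if ∀ k, x k = p then 0
  else (⨅ k, dist (x k) p) *
      (∏ k : Fin n, ∏ l : Fin n, if k < l then dist (x k) (x l) else 1) /
      (⨆ k, dist (x k) p) ^ (n * (n - 1) / 2 + 1)

/-- The condition that `F_n(x_1, …, x_n) → 0` as `max_k d(x_k, p) → ∞`. -/
def CondF {X : Type*} [MetricSpace X] (p : X) (n : ℕ) : Prop :=
  ∀ ε : ℝ, 0 < ε → ∃ M : ℝ, ∀ x : Fin n → X,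
    M ≤ (⨆ k, dist (x k) p) → |FnFun p n x| < ε

/-- The annulus `A(p, R, k) = {x : R/k ≤ d(x,p) ≤ R·k}`; `A(p, R, 1)` is the sphere
`S(p, R)`. -/
def annulus {X : Type*} [MetricSpace X] (p : X) (R k : ℝ) : Set X :=
  {x | R / k ≤ dist x p ∧ dist x p ≤ R * k}

/-- `Ψ(k) = limsup_{R → ∞} diam(A(p, R, k)) / R` (with `diam ∅ = 0`). -/
noncomputable def Psi {X : Type*} [MetricSpace X] (p : X) (k : ℝ) : ℝ :=
  Filter.limsup (fun R : ℝ => Metric.diam (annulus p R k) / R) Filter.atTop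

/-- The condition `lim_{k→1⁺} limsup_{R→∞} diam(A(p,R,k))/R
= limsup_{R→∞} diam(S(p,R))/R = 0`. -/
def CondA {X : Type*} [MetricSpace X] (p : X) : Prop :=
  Filter.Tendsto (fun k => Psi p k) (nhdsWithin 1 (Set.Ioi 1)) (nhds 0) ∧ Psi p 1 = 0

section Helpers

variable {X : Type*} [MetricSpace X]

lemma equivSeq_refl (r : ℕ → ℝ) (x : ℕ → X) : EquivSeq r x x := by
  have h : (fun n => dist (x n) (x n) / r n) = fun _ => (0:ℝ) := by
    funext n; simp
  rw [EquivSeq, h]; exact tendsto_const_nhds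

lemma equivSeq_symm {r : ℕ → ℝ} {x y : ℕ → X} (h : EquivSeq r x y) : EquivSeq r y x := by
  have h2 : (fun n => dist (y n) (x n) / r n) = fun n => dist (x n) (y n) / r n := by
    funext n; rw [dist_comm]
  rw [EquivSeq, h2]; exact h

lemma equivSeq_trans {r : ℕ → ℝ} (hr : ∀ n, 0 < r n) {x y z : ℕ → X}
    (h1 : EquivSeq r x y) (h2 : EquivSeq r y z) : EquivSeq r x z := by
  have hs : Filter.Tendsto (fun n => dist (x n) (y n) / r n + dist (y n) (z n) / r n)
      Filter.atTop (nhds 0) := by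
    simpa using h1.add h2
  refine squeeze_zero (fun n => div_nonneg dist_nonneg (hr n).le) (fun n => ?_) hs
  rw [← add_div]
  exact (div_le_div_iff_of_pos_right (hr n)).2 (dist_triangle _ _ _)

lemma mem_classOf_self {r : ℕ → ℝ} {p : X} {x : ℕ → X} (hx : x ∈ SeqInf r p) :
    x ∈ classOf r p x := ⟨hx, equivSeq_refl r x⟩

lemma tendsto_dist_of_mem_classOf {r : ℕ → ℝ} (hr : ∀ n, 0 < r n) {p : X} {x y : ℕ → X}
    {L : ℝ} (hL : Filter.Tendsto (fun n => dist (x n) p / r n) Filter.atTop (nhds L))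
    (hy : y ∈ classOf r p x) :
    Filter.Tendsto (fun n => dist (y n) p / r n) Filter.atTop (nhds L) := by
  have hdiff : Filter.Tendsto (fun n => dist (y n) p / r n - dist (x n) p / r n)
      Filter.atTop (nhds 0) := by
    refine squeeze_zero_norm (fun n => ?_) hy.2
    rw [Real.norm_eq_abs, div_sub_div_same, abs_div, abs_of_pos (hr n)]
    refine (div_le_div_iff_of_pos_right (hr n)).2 ?_
    calc |dist (y n) p - dist (x n) p| ≤ dist (y n) (x n) := abs_dist_sub_le _ _ _
      _ = dist (x n) (y n) := dist_comm _ _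
  have h := hL.add hdiff
  have heq : (fun n => dist (x n) p / r n + (dist (y n) p / r n - dist (x n) p / r n))
      = fun n => dist (y n) p / r n := by funext n; ring
  rw [heq] at h
  simpa using h

lemma rho0_classOf {r : ℕ → ℝ} (hr : ∀ n, 0 < r n) {p : X} {x : ℕ → X} {L : ℝ}
    (hx : x ∈ SeqInf r p)
    (hL : Filter.Tendsto (fun n => dist (x n) p / r n) Filter.atTop (nhds L)) :
    rho0 r p (classOf r p x) = L := by
  have hset : {L' : ℝ | ∃ y ∈ classOf r p x,
      Filter.Tendsto (fun n => dist (y n) p / r n) Filter.atTop (nhds L')} = {L} := by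
    ext L'
    simp only [Set.mem_setOf_eq, Set.mem_singleton_iff]
    constructor
    · rintro ⟨y, hy, hy'⟩
      exact tendsto_nhds_unique hy' (tendsto_dist_of_mem_classOf hr hL hy)
    · rintro rfl
      exact ⟨x, mem_classOf_self hx, hL⟩
  rw [rho0, hset, csSup_singleton]

lemma classOf_eq_of_equiv {r : ℕ → ℝ} (hr : ∀ n, 0 < r n) (p : X) {x y : ℕ → X}
    (h : EquivSeq r x y) : classOf r p x = classOf r p y := by
  ext z
  exact ⟨fun hz => ⟨hz.1, equivSeq_trans hr (equivSeq_symm h) hz.2⟩,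
    fun hz => ⟨hz.1, equivSeq_trans hr h hz.2⟩⟩

lemma isBounded_annulus (p : X) (R k : ℝ) : Bornology.IsBounded (annulus p R k) := by
  refine (Metric.isBounded_closedBall (x := p) (r := R * k)).subset (fun x hx => ?_)
  exact Metric.mem_closedBall.2 hx.2

lemma isBoundedUnder_ratio (p : X) {k : ℝ} (hk : 0 ≤ k) :
    Filter.IsBoundedUnder (· ≤ ·) Filter.atTop
      (fun R : ℝ => Metric.diam (annulus p R k) / R) := by
  refine ⟨2 * k, Filter.eventually_map.2 ?_⟩
  filter_upwards [Filter.eventually_ge_atTop (1:ℝ)] with R hR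
  have hR0 : (0:ℝ) < R := lt_of_lt_of_le one_pos hR
  rw [div_le_iff₀ hR0]
  have hd : Metric.diam (annulus p R k) ≤ 2 * (R * k) := by
    refine Metric.diam_le_of_forall_dist_le (by positivity) ?_
    intro a ha b hb
    calc dist a b ≤ dist a p + dist p b := dist_triangle _ _ _
      _ ≤ R * k + R * k := add_le_add ha.2 (by rw [dist_comm]; exact hb.2)
      _ = 2 * (R * k) := by ring
  nlinarith

lemma psi_nonneg (p : X) {k : ℝ} (hk : 0 ≤ k) : 0 ≤ Psi p k := by
  refine Filter.le_limsup_of_frequently_le ?_ (isBoundedUnder_ratio p hk)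
  refine Filter.Eventually.frequently ?_
  filter_upwards [Filter.eventually_gt_atTop (0:ℝ)] with R hR
  positivity

lemma exists_R_of_lt_psi (p : X) {k ε : ℝ} (hk : 0 ≤ k) (hε : ε < Psi p k) (n : ℕ) :
    ∃ R : ℝ, (n:ℝ) + 1 ≤ R ∧ ε * R < Metric.diam (annulus p R k) := by
  by_contra hcon
  push_neg at hcon
  have hev : ∀ᶠ R in (Filter.atTop : Filter ℝ), Metric.diam (annulus p R k) / R ≤ ε := by
    filter_upwards [Filter.eventually_ge_atTop ((n:ℝ)+1), Filter.eventually_ge_atTop (1:ℝ)]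
      with R h1 h2
    have hR0 : (0:ℝ) < R := lt_of_lt_of_le one_pos h2
    rw [div_le_iff₀ hR0]
    have := hcon R h1
    linarith
  have hcb : Filter.IsCoboundedUnder (· ≤ ·) (Filter.atTop : Filter ℝ)
      (fun R : ℝ => Metric.diam (annulus p R k) / R) := by
    refine Filter.isCoboundedUnder_le_of_eventually_le _ (x := 0) ?_
    filter_upwards [Filter.eventually_gt_atTop (0:ℝ)] with R hR
    positivity
  exact absurd (Filter.limsup_le_of_le hcb hev) (not_le.2 hε)

lemma tendsto_zero_of_nonneg_of_eventually_lt {f : ℕ → ℝ} (h0 : ∀ n, 0 ≤ f n)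
    (h : ∀ ε : ℝ, 0 < ε → ∀ᶠ n in Filter.atTop, f n < ε) :
    Filter.Tendsto f Filter.atTop (nhds 0) := by
  rw [Metric.tendsto_nhds]
  intro ε hε
  filter_upwards [h ε hε] with n hn
  rw [Real.dist_eq, sub_zero, abs_of_nonneg (h0 n)]
  exact hn

lemma equiv_of_same_limit {p : X} (hA : CondA p) {r : ℕ → ℝ} (hr : ScalingSeq r)
    {x y : ℕ → X} {L : ℝ}
    (hx : Filter.Tendsto (fun n => dist (x n) p / r n) Filter.atTop (nhds L))
    (hy : Filter.Tendsto (fun n => dist (y n) p / r n) Filter.atTop (nhds L)) :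
    EquivSeq r x y := by
  obtain ⟨hrpos, hrtop⟩ := hr
  have hL0 : 0 ≤ L := ge_of_tendsto hx
    (Filter.Eventually.of_forall fun n => div_nonneg dist_nonneg (hrpos n).le)
  rcases hL0.eq_or_lt with hL | hLpos
  · -- L = 0 : both in the root class
    refine squeeze_zero (fun n => div_nonneg dist_nonneg (hrpos n).le) (fun n => ?_)
      (by simpa [← hL] using hx.add hy)
    rw [← add_div]
    refine (div_le_div_iff_of_pos_right (hrpos n)).2 ?_
    calc dist (x n) (y n) ≤ dist (x n) p + dist p (y n) := dist_triangle _ _ _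
      _ = dist (x n) p + dist (y n) p := by rw [dist_comm p]
  · refine tendsto_zero_of_nonneg_of_eventually_lt
      (fun n => div_nonneg dist_nonneg (hrpos n).le) ?_
    intro ε hε
    set ε' : ℝ := ε / (2 * L) with hε'def
    have hε' : 0 < ε' := by positivity
    obtain ⟨k, hΨk, hk1⟩ :=
      ((hA.1.eventually (gt_mem_nhds hε')).and eventually_mem_nhdsWithin).exists
    have hk1' : (1:ℝ) < k := hk1
    have hk0 : (0:ℝ) ≤ k := by linarith
    have hLr : Filter.Tendsto (fun n => L * r n) Filter.atTop Filter.atTop :=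
      hrtop.const_mul_atTop hLpos
    have hdiam : ∀ᶠ n in Filter.atTop,
        Metric.diam (annulus p (L * r n) k) / (L * r n) < ε' :=
      hLr.eventually (Filter.eventually_lt_of_limsup_lt hΨk (isBoundedUnder_ratio p hk0))
    have hIoo : Set.Ioo (L / k) (L * k) ∈ nhds L := by
      refine Ioo_mem_nhds ?_ ?_
      · rw [div_lt_iff₀ (by linarith : (0:ℝ) < k)]; nlinarith
      · nlinarith
    filter_upwards [hx.eventually hIoo, hy.eventually hIoo, hdiam] with n hxn hyn hdn
    have hrn := hrpos n
    have hLrn : 0 < L * r n := mul_pos hLpos hrn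
    have hxmem : x n ∈ annulus p (L * r n) k := by
      constructor
      · have := (lt_div_iff₀ hrn).1 hxn.1
        calc L * r n / k = L / k * r n := by ring
          _ ≤ dist (x n) p := this.le
      · have := (div_lt_iff₀ hrn).1 hxn.2
        calc dist (x n) p ≤ L * k * r n := this.le
          _ = L * r n * k := by ring
    have hymem : y n ∈ annulus p (L * r n) k := by
      constructor
      · have := (lt_div_iff₀ hrn).1 hyn.1
        calc L * r n / k = L / k * r n := by ring
          _ ≤ dist (y n) p := this.le
      · have := (div_lt_iff₀ hrn).1 hyn.2
        calc dist (y n) p ≤ L * k * r n := this.le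
          _ = L * r n * k := by ring
    have hle : dist (x n) (y n) ≤ Metric.diam (annulus p (L * r n) k) :=
      Metric.dist_le_diam_of_mem (isBounded_annulus p _ k) hxmem hymem
    have hdn' : Metric.diam (annulus p (L * r n) k) < ε' * (L * r n) :=
      (div_lt_iff₀ hLrn).1 hdn
    have hεL : ε' * L = ε / 2 := by
      rw [hε'def]; field_simp
    rw [div_lt_iff₀ hrn]
    nlinarith [hε]

end Helpers

/-- Lemma l2.2.4, first part. The annulus/sphere condition holds iff
the labeling `ρ⁰` is injective on `V(G_{X,r̃})` for every scaling sequence `r̃`. -/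
theorem condA_iff_rho0_injective {X : Type*} [MetricSpace X]
    (hX : UnboundedSpace X) (p : X) :
    CondA p ↔
      ∀ r : ℕ → ℝ, ScalingSeq r → Set.InjOn (rho0 r p) (VertexSet r p) := by
  constructor
  · intro hA r hr u hu v hv huv
    obtain ⟨x, hx, rfl⟩ := hu
    obtain ⟨y, hy, rfl⟩ := hv
    obtain ⟨Lx, hLx⟩ := hx.2
    obtain ⟨Ly, hLy⟩ := hy.2
    rw [rho0_classOf hr.1 hx hLx, rho0_classOf hr.1 hy hLy] at huv
    subst huv
    exact classOf_eq_of_equiv hr.1 p (equiv_of_same_limit hA hr hLx hLy)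
  · intro hinj
    by_contra hA
    obtain ⟨ε, hε, k, hk1, hk2, hktend, hbig⟩ :
        ∃ ε : ℝ, 0 < ε ∧ ∃ k : ℕ → ℝ, (∀ n, 1 ≤ k n) ∧ (∀ n, k n ≤ 2) ∧
          Filter.Tendsto k Filter.atTop (nhds 1) ∧
          ∀ n : ℕ, ∃ R : ℝ, (n:ℝ) + 1 ≤ R ∧ ε * R < Metric.diam (annulus p R (k n)) := by
      rw [CondA, not_and_or] at hA
      rcases hA with h1 | h2
      · rw [Metric.tendsto_nhds] at h1
        push_neg at h1
        obtain ⟨δ, hδ, hfreq⟩ := h1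
        have hpick : ∀ n : ℕ, ∃ kk : ℝ, 1 < kk ∧ kk < 1 + 1/((n:ℝ)+1) ∧ δ ≤ Psi p kk := by
          intro n
          have hmem : Set.Ioo (1:ℝ) (1 + 1/((n:ℝ)+1)) ∈ nhdsWithin 1 (Set.Ioi 1) := by
            refine Ioo_mem_nhdsGT_of_mem ?_
            constructor
            · exact le_refl 1
            · have : (0:ℝ) < 1/((n:ℝ)+1) := by positivity
              linarith
          obtain ⟨kk, hk, hmem'⟩ :=
            (hfreq.and_eventually (Filter.eventually_of_mem hmem (fun _ h => h))).exists
          refine ⟨kk, hmem'.1, hmem'.2, ?_⟩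
          have h0 : 0 ≤ Psi p kk := psi_nonneg p (by linarith [hmem'.1.le] : (0:ℝ) ≤ kk)
          rw [Real.dist_eq, sub_zero, abs_of_nonneg h0] at hk
          exact hk
        choose kf hkf1 hkf2 hkf3 using hpick
        refine ⟨δ/2, by linarith, kf, fun n => (hkf1 n).le, fun n => ?_, ?_, fun n => ?_⟩
        · have h1n : 1/((n:ℝ)+1) ≤ 1 := by
            rw [div_le_one (by positivity)]
            linarith [Nat.cast_nonneg (α := ℝ) n]
          linarith [hkf2 n]
        · refine tendsto_of_tendsto_of_tendsto_of_le_of_le (f := kf)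
            tendsto_const_nhds ?_ (fun n => (hkf1 n).le) (fun n => (hkf2 n).le)
          have : Filter.Tendsto (fun n : ℕ => 1/((n:ℝ)+1)) Filter.atTop (nhds 0) :=
            tendsto_one_div_add_atTop_nhds_zero_nat
          simpa using (tendsto_const_nhds (x := (1:ℝ))).add this
        · exact exists_R_of_lt_psi p (by linarith [hkf1 n] : (0:ℝ) ≤ kf n)
            (lt_of_lt_of_le (by linarith) (hkf3 n)) n
      · have h0 : 0 ≤ Psi p 1 := psi_nonneg p zero_le_one
        have hpos : 0 < Psi p 1 := h0.lt_of_ne (Ne.symm h2)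
        exact ⟨Psi p 1 / 2, by linarith, fun _ => 1, fun _ => le_refl 1,
          fun _ => one_le_two, tendsto_const_nhds,
          fun n => exists_R_of_lt_psi p zero_le_one (by linarith) n⟩
    choose R hR1 hR2 using hbig
    have hRpos : ∀ n, 0 < R n := fun n =>
      lt_of_lt_of_le (by positivity) (hR1 n)
    have hpts : ∀ n, ∃ a b : X, a ∈ annulus p (R n) (k n) ∧ b ∈ annulus p (R n) (k n) ∧
        ε * R n < dist a b := by
      intro n
      by_contra hcon
      push_neg at hcon
      have hd : Metric.diam (annulus p (R n) (k n)) ≤ ε * R n := by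
        refine Metric.diam_le_of_forall_dist_le (mul_nonneg hε.le (hRpos n).le) ?_
        intro a ha b hb
        exact hcon a b ha hb
      linarith [hR2 n]
    choose x y hx hy hxy using hpts
    have hRtop : Filter.Tendsto R Filter.atTop Filter.atTop := by
      refine tendsto_atTop_mono hR1 ?_
      exact Filter.tendsto_atTop_add_const_right _ 1 tendsto_natCast_atTop_atTop
    have hscal : ScalingSeq R := ⟨hRpos, hRtop⟩
    have hkpos : ∀ n, (0:ℝ) < k n := fun n => lt_of_lt_of_le one_pos (hk1 n)
    have hinvk : Filter.Tendsto (fun n => (k n)⁻¹) Filter.atTop (nhds 1) := by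
      simpa using hktend.inv₀ one_ne_zero
    have hdistlim : ∀ (z : ℕ → X), (∀ n, z n ∈ annulus p (R n) (k n)) →
        Filter.Tendsto (fun n => dist (z n) p / R n) Filter.atTop (nhds 1) := by
      intro z hz
      refine tendsto_of_tendsto_of_tendsto_of_le_of_le hinvk hktend ?_ ?_
      · intro n
        have h1 : R n / k n ≤ dist (z n) p := (hz n).1
        have h1' : R n ≤ dist (z n) p * k n := (div_le_iff₀ (hkpos n)).1 h1
        show (k n)⁻¹ ≤ dist (z n) p / R n
        rw [inv_eq_one_div, div_le_div_iff₀ (hkpos n) (hRpos n)]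
        linarith
      · intro n
        rw [div_le_iff₀ (hRpos n)]
        calc dist (z n) p ≤ R n * k n := (hz n).2
          _ = k n * R n := mul_comm _ _
    have hdisttop : ∀ (z : ℕ → X), (∀ n, z n ∈ annulus p (R n) (k n)) →
        Filter.Tendsto (fun n => dist (z n) p) Filter.atTop Filter.atTop := by
      intro z hz
      refine tendsto_atTop_mono (fun n => ?_) (hRtop.atTop_div_const two_pos)
      calc R n / 2 ≤ R n / k n := div_le_div_of_nonneg_left (hRpos n).le (hkpos n) (hk2 n)
        _ ≤ dist (z n) p := (hz n).1
    have hxSeq : x ∈ SeqInf R p :=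
      ⟨hdisttop x hx, 1, hdistlim x hx⟩
    have hySeq : y ∈ SeqInf R p :=
      ⟨hdisttop y hy, 1, hdistlim y hy⟩
    have hclass : classOf R p x = classOf R p y := by
      refine hinj R hscal ⟨x, hxSeq, rfl⟩ ⟨y, hySeq, rfl⟩ ?_
      rw [rho0_classOf hRpos hxSeq (hdistlim x hx),
        rho0_classOf hRpos hySeq (hdistlim y hy)]
    have hequiv : EquivSeq R x y := by
      have : y ∈ classOf R p x := by rw [hclass]; exact mem_classOf_self hySeq
      exact this.2
    have hev : ∀ᶠ n in Filter.atTop, dist (x n) (y n) / R n < ε :=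
      hequiv.eventually (gt_mem_nhds hε)
    obtain ⟨n, hn⟩ := hev.exists
    have : ε < dist (x n) (y n) / R n := (lt_div_iff₀ (hRpos n)).2 (by linarith [hxy n])
    linarith
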